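/- Let c > 0, d > 0 with d·g(e^{-c}) > c, where g satisfies: g : [0,∞) → [0,1], g increasing on [0,1), g(ξ) = 0 for ξ > 1. Let p : ℝ → (0,∞) be a periodic solution of x'(t) = −c x(t) + d g(x(t−1)) (in the integrated sense) with p(0) = 1 and p(t) > 1 for all t ∈ [−1, 0). Then p(t) ≥ e^{-c} for all t ∈ ℝ. -/

import Mathlib

open Real

theorem periodic_solution_lower_bound (c d : ℝ) (g p : ℝ → ℝ)
    (hc : 0 < c) (hd : 0 < d)
    (hg_range : ∀ ξ : ℝ, 0 ≤ ξ → g ξ ∈ Set.Icc (0:ℝ) 1)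
    (hg_mono : MonotoneOn g (Set.Ico (0:ℝ) 1))
    (hg_zero : ∀ ξ : ℝ, 1 < ξ → g ξ = 0)
    (hkey : c < d * g (Real.exp (-c)))
    (hp_pos : ∀ t : ℝ, 0 < p t)
    (hp_per : ∃ ω : ℝ, 0 < ω ∧ ∀ t : ℝ, p (t + ω) = p t)
    (hp_cont : Continuous p)
    (hp_int : ∀ τ t : ℝ, 0 ≤ τ → τ < t →
      IntervalIntegrable (fun s => Real.exp (-c * (t - s)) * g (p (s - 1))) MeasureTheory.volume τ t)
    (hp_eq : ∀ τ t : ℝ, 0 ≤ τ → τ < t →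
      p t = Real.exp (-c * (t - τ)) * p τ +
        d * ∫ s in τ..t, Real.exp (-c * (t - s)) * g (p (s - 1)))
    (hp0 : p 0 = 1)
    (hp_init : ∀ t ∈ Set.Ico (-1 : ℝ) 0, 1 < p t) :
    ∀ t : ℝ, Real.exp (-c) ≤ p t := by
  obtain ⟨ω, hω, hper⟩ := hp_per
  have hec1 : Real.exp (-c) < 1 := by
    rw [← Real.exp_zero]
    exact Real.exp_lt_exp.mpr (by linarith)
  have hec0 : 0 < Real.exp (-c) := Real.exp_pos _
  have hgnn : ∀ s : ℝ, 0 ≤ g (p s) := fun s => (hg_range _ (hp_pos s).le).1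
  have key : ∀ t : ℝ, 0 ≤ t → Real.exp (-c) ≤ p t := by
    by_contra hcon
    push_neg at hcon
    obtain ⟨t0, ht0, hlt⟩ := hcon
    set A : Set ℝ := {T | 0 ≤ T ∧ ∀ s ∈ Set.Icc (0:ℝ) T, Real.exp (-c) ≤ p s} with hAdef
    have h0A : (0:ℝ) ∈ A := by
      refine ⟨le_refl 0, fun s hs => ?_⟩
      have : s = 0 := le_antisymm hs.2 hs.1
      rw [this, hp0]; exact hec1.le
    have hbdd : BddAbove A := by
      refine ⟨t0, fun T hT => ?_⟩
      by_contra h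
      push_neg at h
      exact absurd (hT.2 t0 ⟨ht0, h.le⟩) (not_le.mpr hlt)
    set ts := sSup A with htsdef
    have h0ts : 0 ≤ ts := le_csSup hbdd h0A
    have hA_all : ∀ s ∈ Set.Icc (0:ℝ) ts, Real.exp (-c) ≤ p s := by
      intro s hs
      by_contra h
      push_neg at h
      have hopen : IsOpen (p ⁻¹' Set.Iio (Real.exp (-c))) := (isOpen_Iio).preimage hp_cont
      obtain ⟨ε, hε, hball⟩ := Metric.isOpen_iff.mp hopen s h
      obtain ⟨T, hTA, hTgt⟩ := exists_lt_of_lt_csSup ⟨0, h0A⟩ (show s - ε < ts by linarith [hs.2])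
      rcases le_or_gt s T with hle | hlt'
      · exact absurd (hTA.2 s ⟨hs.1, hle⟩) (not_le.mpr h)
      · have hmem : T ∈ Metric.ball s ε := by
          rw [Metric.mem_ball, Real.dist_eq, abs_of_nonpos (by linarith)]
          linarith
        exact absurd (hTA.2 T ⟨hTA.1, le_refl T⟩) (not_le.mpr (hball hmem))
    have hts_le : p ts ≤ Real.exp (-c) := by
      by_contra h
      push_neg at h
      have hopen : IsOpen (p ⁻¹' Set.Ioi (Real.exp (-c))) := (isOpen_Ioi).preimage hp_cont
      obtain ⟨ε, hε, hball⟩ := Metric.isOpen_iff.mp hopen ts h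
      have hmem : ts + ε/2 ∈ A := by
        refine ⟨by linarith, fun s hs => ?_⟩
        rcases le_or_gt s ts with h1 | h1
        · exact hA_all s ⟨hs.1, h1⟩
        · refine (hball ?_).le
          rw [Metric.mem_ball, Real.dist_eq, abs_of_nonneg (by linarith)]
          linarith [hs.2]
      linarith [le_csSup hbdd hmem]
    set S : Set ℝ := Set.Icc 0 ts ∩ p ⁻¹' {1} with hSdef
    have hSne : S.Nonempty := ⟨0, ⟨le_refl 0, h0ts⟩, hp0⟩
    have hSbdd : BddAbove S := (bddAbove_Icc).mono Set.inter_subset_left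
    have hSclosed : IsClosed S := isClosed_Icc.inter (isClosed_singleton.preimage hp_cont)
    have hτS : sSup S ∈ S := hSclosed.csSup_mem hSne hSbdd
    set τ := sSup S with hτdef
    have hτ0 : 0 ≤ τ := hτS.1.1
    have hτts : τ ≤ ts := hτS.1.2
    have hpτ : p τ = 1 := hτS.2
    have hp_lt1 : ∀ s, τ < s → s ≤ ts → p s < 1 := by
      intro s h1 h2
      by_contra h
      push_neg at h
      have hmem1 : (1:ℝ) ∈ Set.Icc (p ts) (p s) := ⟨by linarith, h⟩
      obtain ⟨u, hu, hpu⟩ := intermediate_value_Icc' h2 hp_cont.continuousOn hmem1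
      have huS : u ∈ S := ⟨⟨by linarith [hu.1], hu.2⟩, hpu⟩
      have := le_csSup hSbdd huS
      linarith [hu.1]
    rcases lt_or_ge ts (τ + 1) with hcase | hcase
    · -- Case 1 : ts < τ + 1, extend using p τ = 1
      have hmem : τ + 1 ∈ A := by
        refine ⟨by linarith, fun s hs => ?_⟩
        rcases le_or_gt s ts with h1 | h1
        · exact hA_all s ⟨hs.1, h1⟩
        · have hτs : τ < s := lt_of_le_of_lt hτts h1
          have heq := hp_eq τ s hτ0 hτs
          have hint : 0 ≤ ∫ x in τ..s, Real.exp (-c * (s - x)) * g (p (x - 1)) :=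
            intervalIntegral.integral_nonneg hτs.le
              (fun u _ => mul_nonneg (Real.exp_nonneg _) (hgnn _))
          have hexp : Real.exp (-c) ≤ Real.exp (-c * (s - τ)) := by
            apply Real.exp_le_exp.mpr
            nlinarith [hs.2]
          calc Real.exp (-c) ≤ Real.exp (-c * (s - τ)) * p τ := by rw [hpτ]; linarith
          _ ≤ p s := by rw [heq]; nlinarith
      linarith [le_csSup hbdd hmem]
    · -- Case 2 : τ + 1 ≤ ts, extend by one unit using the integral estimate
      have hmem : ts + 1 ∈ A := by
        refine ⟨by linarith, fun s hs => ?_⟩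
        rcases le_or_gt s ts with h1 | h1
        · exact hA_all s ⟨hs.1, h1⟩
        · have heq := hp_eq ts s h0ts h1
          set E := Real.exp (-c * (s - ts)) with hEdef
          have hE1 : E ≤ 1 := by
            rw [hEdef, ← Real.exp_zero]
            exact Real.exp_le_exp.mpr (by nlinarith)
          have hE0 : 0 < E := Real.exp_pos _
          have hint1 := hp_int ts s h0ts h1
          have hconte : Continuous fun u : ℝ => Real.exp (-c * (s - u)) :=
            Real.continuous_exp.comp (continuous_const.mul (continuous_const.sub continuous_id))
          have hint2 : IntervalIntegrable (fun u => Real.exp (-c * (s - u)) * g (Real.exp (-c)))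
              MeasureTheory.volume ts s :=
            (hconte.mul continuous_const).intervalIntegrable ts s
          have hae : (fun u => Real.exp (-c * (s - u)) * g (Real.exp (-c)))
              ≤ᵐ[MeasureTheory.volume.restrict (Set.Icc ts s)]
              (fun u => Real.exp (-c * (s - u)) * g (p (u - 1))) := by
            have h1' : ∀ᵐ u : ℝ ∂MeasureTheory.volume, u ≠ τ + 1 := by
              rw [MeasureTheory.ae_iff]
              simpa using Real.volume_singleton
            filter_upwards [MeasureTheory.ae_restrict_mem measurableSet_Icc,
              MeasureTheory.ae_restrict_of_ae h1'] with u hu hune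
            have hτu : τ < u - 1 := by
              have hle : τ ≤ u - 1 := by linarith [hu.1]
              rcases lt_or_eq_of_le hle with h | h
              · exact h
              · exact absurd (by linarith : u = τ + 1) hune
            have hu2 : u - 1 ≤ ts := by linarith [hu.2, hs.2]
            have hplow : Real.exp (-c) ≤ p (u - 1) := hA_all _ ⟨by linarith, hu2⟩
            have hphigh : p (u - 1) < 1 := hp_lt1 _ hτu hu2
            have hgm := hg_mono ⟨hec0.le, hec1⟩ ⟨(hp_pos _).le, hphigh⟩ hplow
            exact mul_le_mul_of_nonneg_left hgm (Real.exp_nonneg _)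
          have hmono := intervalIntegral.integral_mono_ae_restrict h1.le hint2 hint1 hae
          have hcalc : (∫ u in ts..s, Real.exp (-c * (s - u)) * g (Real.exp (-c)))
              = g (Real.exp (-c)) * ((1 - E) / c) := by
            rw [intervalIntegral.integral_mul_const]
            have hderiv : ∀ u : ℝ, HasDerivAt (fun v => Real.exp (-c * (s - v)) / c)
                (Real.exp (-c * (s - u))) u := by
              intro u
              have hd1 : HasDerivAt (fun v : ℝ => -c * (s - v)) c u := by
                have := ((hasDerivAt_id u).const_sub s).const_mul (-c)
                simpa using this
              have hd2 := (hd1.exp).div_const c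
              rwa [mul_div_cancel_right₀ _ hc.ne'] at hd2
            have hie := intervalIntegral.integral_eq_sub_of_hasDerivAt
              (f := fun v => Real.exp (-c * (s - v)) / c) (fun u _ => hderiv u)
              (hconte.intervalIntegrable ts s)
            rw [hie]
            simp only [sub_self, mul_zero, Real.exp_zero]
            ring
          rw [hcalc] at hmono
          have hptsl : Real.exp (-c) ≤ p ts := hA_all ts ⟨h0ts, le_refl _⟩
          rw [heq]
          set G := g (Real.exp (-c)) with hGdef
          set I := ∫ u in ts..s, Real.exp (-c * (s - u)) * g (p (u - 1)) with hIdef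
          set K := (1 - E) / c with hKdef
          have hKnn : 0 ≤ K := div_nonneg (by linarith) hc.le
          have hcK : c * K = 1 - E := by
            rw [hKdef]; field_simp
          have h1 : 0 ≤ (d * G - c) * K := mul_nonneg (by linarith) hKnn
          have h2 : 0 ≤ d * (I - G * K) := mul_nonneg hd.le (by linarith)
          have h3 : 0 ≤ E * (p ts - Real.exp (-c)) := mul_nonneg hE0.le (by linarith)
          have h4 : 0 ≤ (1 - E) * (1 - Real.exp (-c)) := mul_nonneg (by linarith) (by linarith)
          nlinarith [h1, h2, h3, h4, hcK]
      linarith [le_csSup hbdd hmem]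
  intro t
  have hper' : Function.Periodic p ω := hper
  set n := ⌈(-t) / ω⌉₊ with hndef
  have hn : (-t) / ω ≤ (n : ℝ) := Nat.le_ceil _
  have hnt : 0 ≤ t + (n : ℝ) * ω := by
    have := (div_le_iff₀ hω).mp hn
    linarith
  have hk := key (t + (n : ℝ) * ω) hnt
  rwa [(hper'.nat_mul n) t] at hk
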